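/- Let T be a finite rooted tree. If T is a rooted path, then rpw(T) = 1. Otherwise, rpw(T) equals the minimum over all root-to-leaf paths P of T of the maximum over all subtrees T' of T − P of (1 + rpw(T')). -/

import Mathlib

/-- A finite rooted tree: a root together with the list of subtrees
rooted at its children (the list order is the left-to-right order for
ordered trees; definitions that do not mention the order are
order-independent). -/
inductive RTree : Type where
  | node : List RTree → RTree

namespace RTree

/-- The subtrees rooted at the children of the root. -/
def children : RTree → List RTree
  | node cs => cs

/-- Number of nodes of the tree. -/
def size : RTree → ℕ
  | node cs => 1 + (cs.attach.map fun c => size c.1).sum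
decreasing_by have := List.sizeOf_lt_of_mem c.2; simp only [RTree.node.sizeOf_spec]; omega

/-- Maximum of a list of naturals (`0` for the empty list). -/
def listMaxD (l : List ℕ) : ℕ := l.foldr max 0

/-- Minimum of a nonempty list of naturals (`0` for the empty list). -/
def listMinD : List ℕ → ℕ
  | [] => 0
  | x :: xs => xs.foldr min x

/-- Given the list `rs` of rooted pathwidths of the children of the root,
the rooted pathwidth of the tree:
`1` if there are no children, and otherwise
`min over j of (max over i of rs[i] + χ(i ≠ j))`. -/
def rpwAux (rs : List ℕ) : ℕ :=
  if rs = [] then 1 else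
    listMinD ((List.range rs.length).map fun j =>
      listMaxD ((List.range rs.length).map fun i =>
        rs.getD i 0 + if i = j then 0 else 1))

/-- The rooted pathwidth `rpw` of a rooted tree. -/
def rpw : RTree → ℕ
  | node cs => rpwAux (cs.attach.map fun c => rpw c.1)
decreasing_by have := List.sizeOf_lt_of_mem c.2; simp only [RTree.node.sizeOf_spec]; omega

end RTree

namespace RTree

/-- `T` is a rooted path: every node has at most one child. -/
inductive IsRootedPath : RTree → Prop
  | leaf : IsRootedPath (RTree.node [])
  | cons (c : RTree) : IsRootedPath c → IsRootedPath (RTree.node [c])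

/-- `OffPath T off` holds iff there is a root-to-leaf path `P` in `T` such
that the rooted subtrees into which `T - P` decomposes (each connected
component of `T - P`, rooted at its node of minimum depth) are exactly the
trees in the list `off`. -/
inductive OffPath : RTree → List RTree → Prop
  | leaf : OffPath (RTree.node []) []
  | step (cs : List RTree) (j : Fin cs.length) (rest : List RTree) :
      OffPath (cs.get j) rest →
      OffPath (RTree.node cs) (cs.eraseIdx j.1 ++ rest)

/- ------------------ auxiliary lemmas ------------------ -/

theorem rpw_node (cs : List RTree) : rpw (node cs) = rpwAux (cs.map rpw) := by
  rw [rpw, List.attach_map_val]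

theorem le_listMaxD {l : List ℕ} {x : ℕ} (h : x ∈ l) : x ≤ listMaxD l := by
  induction l with
  | nil => cases h
  | cons a t ih =>
    simp only [listMaxD, List.foldr_cons] at *
    rcases List.mem_cons.1 h with rfl | h
    · exact le_max_left _ _
    · exact le_trans (ih h) (le_max_right _ _)

theorem listMaxD_le {l : List ℕ} {b : ℕ} (h : ∀ x ∈ l, x ≤ b) : listMaxD l ≤ b := by
  induction l with
  | nil => exact Nat.zero_le b
  | cons a t ih =>
    simp only [listMaxD, List.foldr_cons] at *
    exact max_le (h a (.head _)) (ih fun x hx => h x (.tail _ hx))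

theorem foldr_min_le_init (a : ℕ) (l : List ℕ) : l.foldr min a ≤ a := by
  induction l with
  | nil => exact le_rfl
  | cons b t ih => exact le_trans (min_le_right _ _) ih

theorem foldr_min_le_mem {a x : ℕ} {l : List ℕ} (h : x ∈ l) : l.foldr min a ≤ x := by
  induction l with
  | nil => cases h
  | cons b t ih =>
    rcases List.mem_cons.1 h with rfl | h
    · exact min_le_left _ _
    · exact le_trans (min_le_right _ _) (ih h)

theorem le_foldr_min {a b : ℕ} {l : List ℕ} (ha : b ≤ a) (h : ∀ x ∈ l, b ≤ x) :
    b ≤ l.foldr min a := by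
  induction l with
  | nil => exact ha
  | cons c t ih => exact le_min (h c (.head _)) (ih fun x hx => h x (.tail _ hx))

theorem foldr_min_mem (a : ℕ) (l : List ℕ) : l.foldr min a = a ∨ l.foldr min a ∈ l := by
  induction l with
  | nil => exact Or.inl rfl
  | cons b t ih =>
    simp only [List.foldr_cons]
    rcases le_total b (t.foldr min a) with h | h
    · right; rw [min_eq_left h]; exact .head _
    · rw [min_eq_right h]
      rcases ih with h' | h'
      · exact Or.inl h'
      · exact Or.inr (.tail _ h')

theorem listMinD_le {l : List ℕ} {x : ℕ} (h : x ∈ l) : listMinD l ≤ x := by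
  cases l with
  | nil => cases h
  | cons a t =>
    rcases List.mem_cons.1 h with rfl | h
    · exact foldr_min_le_init _ _
    · exact foldr_min_le_mem h

theorem listMinD_mem {l : List ℕ} (h : l ≠ []) : listMinD l ∈ l := by
  cases l with
  | nil => exact absurd rfl h
  | cons a t =>
    rcases foldr_min_mem a t with h' | h'
    · rw [listMinD, h']; exact .head _
    · exact .tail _ h'

theorem rpwAux_le {rs : List ℕ} {b j : ℕ} (hj : j < rs.length)
    (hb : ∀ i, i < rs.length → rs.getD i 0 + (if i = j then 0 else 1) ≤ b) :
    rpwAux rs ≤ b := by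
  have hne : rs ≠ [] := by
    intro h; subst h; simp at hj
  rw [rpwAux, if_neg hne]
  refine le_trans (listMinD_le (List.mem_map_of_mem (List.mem_range.2 hj))) (listMaxD_le ?_)
  intro x hx
  rcases List.mem_map.1 hx with ⟨i, hi, rfl⟩
  exact hb i (List.mem_range.1 hi)

theorem rpwAux_spec {rs : List ℕ} (hne : rs ≠ []) :
    ∃ j, j < rs.length ∧ ∀ i, i < rs.length →
      rs.getD i 0 + (if i = j then 0 else 1) ≤ rpwAux rs := by
  rw [rpwAux, if_neg hne]
  have hlen : 0 < rs.length := List.length_pos_iff.2 hne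
  have hne2 : (List.range rs.length).map (fun j =>
      listMaxD ((List.range rs.length).map fun i =>
        rs.getD i 0 + if i = j then 0 else 1)) ≠ [] := by
    intro hmap
    have := congrArg List.length hmap
    simp only [List.length_map, List.length_range, List.length_nil] at this
    omega
  rcases List.mem_map.1 (listMinD_mem hne2) with ⟨j, hj, hje⟩
  refine ⟨j, List.mem_range.1 hj, fun i hi => ?_⟩
  rw [← hje]
  exact le_listMaxD (List.mem_map_of_mem (List.mem_range.2 hi))

theorem sizeOf_lt_of_mem_children {c : RTree} {cs : List RTree} (h : c ∈ cs) :
    sizeOf c < sizeOf (node cs) := by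
  have := List.sizeOf_lt_of_mem h
  simp only [node.sizeOf_spec]; omega

theorem strongRec {P : RTree → Prop}
    (h : ∀ cs, (∀ c ∈ cs, P c) → P (node cs)) : ∀ T, P T := by
  have key : ∀ n (T : RTree), sizeOf T ≤ n → P T := by
    intro n
    induction n with
    | zero =>
      intro T hT
      obtain ⟨cs⟩ := T
      simp [node.sizeOf_spec] at hT
    | succ n ih =>
      intro T hT
      obtain ⟨cs⟩ := T
      refine h cs fun c hc => ih c ?_
      have := sizeOf_lt_of_mem_children hc
      omega
  exact fun T => key (sizeOf T) T le_rfl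

theorem one_le_rpw : ∀ T, 1 ≤ rpw T := by
  refine strongRec fun cs ih => ?_
  rw [rpw_node]
  by_cases hcs : cs = []
  · subst hcs; simp [rpwAux]
  · have hne : cs.map rpw ≠ [] := by simpa using hcs
    obtain ⟨j, hj, hspec⟩ := rpwAux_spec hne
    have hj' : j < cs.length := by simpa using hj
    have h1 : (cs.map rpw).getD j 0 = rpw cs[j] := by
      rw [List.getD_eq_getElem _ _ hj, List.getElem_map]
    have h2 := hspec j hj
    rw [if_pos rfl, h1] at h2
    have h3 := ih cs[j] (cs.getElem_mem hj')
    omega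

theorem isRootedPath_of_offPath_nil {T : RTree} {off : List RTree}
    (h : OffPath T off) (hoff : off = []) : IsRootedPath T := by
  induction h with
  | leaf => exact .leaf
  | step cs j rest h ih =>
    rcases List.append_eq_nil_iff.1 hoff with ⟨h1, h2⟩
    have hlen : cs.length = 1 := by
      have := List.length_eraseIdx (l := cs) (i := j.1)
      rw [h1] at this
      have hj := j.2
      simp at this
      omega
    obtain ⟨a, rfl⟩ := List.length_eq_one_iff.1 hlen
    have hj0 : j = ⟨0, by simp⟩ := Fin.ext (by omega)
    subst hj0
    exact .cons a (ih h2)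

theorem rpw_of_isRootedPath {T : RTree} (h : IsRootedPath T) : rpw T = 1 := by
  induction h with
  | leaf => rw [rpw_node]; rfl
  | cons c hc ih =>
    rw [rpw_node, List.map_cons, List.map_nil, ih]
    rfl

theorem rpw_le_of_offPath {T : RTree} {off : List RTree} (h : OffPath T off) :
    rpw T ≤ max 1 (listMaxD (off.map fun t => 1 + rpw t)) := by
  induction h with
  | leaf => rw [rpw_node]; exact le_trans (by rw [rpwAux]; rfl) (le_max_left _ _)
  | step cs j rest h ih =>
    rw [rpw_node]
    refine rpwAux_le (j := j.1) (by simpa using j.2) ?_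
    intro i hi
    have hi' : i < cs.length := by simpa using hi
    have hgd : (cs.map rpw).getD i 0 = rpw cs[i] := by
      rw [List.getD_eq_getElem _ _ hi, List.getElem_map]
    have hLL : listMaxD (rest.map fun t => 1 + rpw t) ≤
        listMaxD (((cs.eraseIdx j.1 ++ rest).map fun t => 1 + rpw t)) := by
      refine listMaxD_le fun x hx => le_listMaxD ?_
      rw [List.map_append]
      exact List.mem_append_right _ hx
    by_cases hij : i = j.1
    · rw [if_pos hij, hgd, Nat.add_zero]
      have hget : cs.get j = cs[i] := by
        rw [List.get_eq_getElem]; congr 1; omega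
      rw [hget] at ih
      exact le_trans ih (max_le_max le_rfl hLL)
    · rw [if_neg hij, hgd]
      have hmem : cs[i] ∈ cs.eraseIdx j.1 :=
        List.mem_eraseIdx_iff_getElem.2 ⟨i, hi', hij, rfl⟩
      have : 1 + rpw cs[i] ∈ (cs.eraseIdx j.1 ++ rest).map fun t => 1 + rpw t := by
        rw [List.map_append]
        exact List.mem_append_left _ (List.mem_map_of_mem hmem)
      have := le_listMaxD this
      omega

theorem exists_offPath_le : ∀ T, ∃ off, OffPath T off ∧
    listMaxD (off.map fun t => 1 + rpw t) ≤ rpw T := by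
  refine strongRec fun cs ih => ?_
  by_cases hcs : cs = []
  · subst hcs
    exact ⟨[], .leaf, Nat.zero_le _⟩
  · have hne : cs.map rpw ≠ [] := by simpa using hcs
    obtain ⟨j, hj, hspec⟩ := rpwAux_spec hne
    have hj' : j < cs.length := by simpa using hj
    obtain ⟨rest, hrest, hrle⟩ := ih cs[j] (cs.getElem_mem hj')
    refine ⟨cs.eraseIdx j ++ rest, ?_, ?_⟩
    · exact OffPath.step cs ⟨j, hj'⟩ rest hrest
    · rw [rpw_node]
      refine listMaxD_le fun x hx => ?_
      rcases List.mem_map.1 hx with ⟨t, ht, rfl⟩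
      rcases List.mem_append.1 ht with ht | ht
      · rcases List.mem_eraseIdx_iff_getElem.1 ht with ⟨i, hi, hij, rfl⟩
        have h2 := hspec i (by simpa using hi)
        rw [if_neg hij, List.getD_eq_getElem _ _ (by simpa using hi),
          List.getElem_map] at h2
        omega
      · have h1 : 1 + rpw t ≤ listMaxD (rest.map fun t => 1 + rpw t) :=
          le_listMaxD (List.mem_map_of_mem ht)
        have h2 := hspec j hj
        rw [if_pos rfl, List.getD_eq_getElem _ _ hj, List.getElem_map] at h2
        omega

/-- If `T` is a rooted path then `rpw T = 1`; otherwise `rpw T` equals the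
minimum over all root-to-leaf paths `P` of the maximum over all subtrees
`T'` of `T - P` of `1 + rpw T'`. -/
theorem rpw_eq_min_over_root_to_leaf_paths (T : RTree) :
    (IsRootedPath T → rpw T = 1) ∧
    (¬ IsRootedPath T →
      rpw T = sInf {v : ℕ | ∃ off : List RTree, OffPath T off ∧
        v = listMaxD (off.map fun t' => 1 + rpw t')}) := by
  constructor
  · exact rpw_of_isRootedPath
  · intro hnp
    obtain ⟨off, hoff, hle⟩ := exists_offPath_le T
    have hmem : listMaxD (off.map fun t' => 1 + rpw t') ∈
        {v : ℕ | ∃ off : List RTree, OffPath T off ∧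
          v = listMaxD (off.map fun t' => 1 + rpw t')} := ⟨off, hoff, rfl⟩
    refine le_antisymm ?_ (le_trans (Nat.sInf_le hmem) hle)
    refine le_csInf ⟨_, hmem⟩ ?_
    rintro v ⟨off', hoff', rfl⟩
    have h1 : off' ≠ [] := fun h => hnp (isRootedPath_of_offPath_nil hoff' h)
    obtain ⟨t, ts, rfl⟩ := List.exists_cons_of_ne_nil h1
    have h2 : 1 ≤ listMaxD ((t :: ts).map fun t' => 1 + rpw t') := by
      refine le_trans ?_ (le_listMaxD (l := (t :: ts).map fun t' => 1 + rpw t')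
        (x := 1 + rpw t) (by simp))
      omega
    have h3 := rpw_le_of_offPath hoff'
    rw [max_eq_right h2] at h3
    exact h3

end RTree
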